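/- For every integer n ≥ 2, the function r ↦ (∫₀^r sinh^{n−1} x dx)/sinh^{n}(r) is monotonically decreasing on (0,∞). -/

import Mathlib

open Real

theorem sinh_integral_div_sinh_pow_strictAnti
    (n : ℕ) (hn : 2 ≤ n) :
    StrictAntiOn
      (fun r : ℝ => (∫ x in (0 : ℝ)..r, Real.sinh x ^ (n - 1)) / Real.sinh r ^ n)
      (Set.Ioi 0) := by
  have hcont : Continuous fun x : ℝ => Real.sinh x ^ (n - 1) := Real.continuous_sinh.pow _
  set F : ℝ → ℝ := fun r => ∫ x in (0 : ℝ)..r, Real.sinh x ^ (n - 1) with hFdef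
  have hFderiv : ∀ r : ℝ, HasDerivAt F (Real.sinh r ^ (n - 1)) r := fun r =>
    (hcont.integral_hasStrictDerivAt 0 r).hasDerivAt
  have hFcont : Continuous F :=
    continuous_iff_continuousAt.2 fun r => (hFderiv r).continuousAt
  have hFpos : ∀ r : ℝ, 0 < r → 0 < F r := by
    intro r hr
    apply intervalIntegral.intervalIntegral_pos_of_pos_on
      (hcont.intervalIntegrable 0 r)
    · intro x hx
      exact pow_pos (Real.sinh_pos_iff.2 hx.1) _
    · exact hr
  -- the auxiliary function g
  set g : ℝ → ℝ := fun r => (n : ℝ) * Real.cosh r * F r - Real.sinh r ^ n with hgdef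
  have hgderiv : ∀ r : ℝ, HasDerivAt g ((n : ℝ) * Real.sinh r * F r) r := by
    intro r
    have h1 : HasDerivAt (fun r : ℝ => (n : ℝ) * Real.cosh r * F r)
        ((n : ℝ) * Real.sinh r * F r + (n : ℝ) * Real.cosh r * Real.sinh r ^ (n - 1)) r := by
      have := (((Real.hasDerivAt_cosh r).const_mul (n : ℝ)).mul (hFderiv r))
      exact this
    have h2 : HasDerivAt (fun r : ℝ => Real.sinh r ^ n)
        ((n : ℝ) * Real.sinh r ^ (n - 1) * Real.cosh r) r :=
      (Real.hasDerivAt_sinh r).pow n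
    have := h1.sub h2
    exact this.congr_deriv (by ring)
  have hgpos : ∀ r : ℝ, 0 < r → 0 < g r := by
    intro r hr
    have hmono : StrictMonoOn g (Set.Ici (0 : ℝ)) := by
      apply strictMonoOn_of_deriv_pos (convex_Ici 0)
      · exact Continuous.continuousOn (by continuity)
      · intro x hx
        rw [interior_Ici] at hx
        rw [(hgderiv x).deriv]
        have : (0 : ℝ) < n := by positivity
        exact mul_pos (mul_pos this (Real.sinh_pos_iff.2 hx)) (hFpos x hx)
    have := hmono (Set.self_mem_Ici) (Set.mem_Ici.2 hr.le) hr
    simpa [hgdef, hFdef, Real.sinh_zero, zero_pow (by omega : n ≠ 0)] using this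
  apply strictAntiOn_of_deriv_neg (convex_Ioi 0)
  · apply ContinuousOn.div hFcont.continuousOn
      (Real.continuous_sinh.pow n).continuousOn
    intro r hr
    exact pow_ne_zero _ (ne_of_gt (Real.sinh_pos_iff.2 hr))
  · intro r hr
    rw [interior_Ioi] at hr
    have hs : 0 < Real.sinh r := Real.sinh_pos_iff.2 hr
    have hG : HasDerivAt (fun r : ℝ => Real.sinh r ^ n)
        ((n : ℝ) * Real.sinh r ^ (n - 1) * Real.cosh r) r :=
      (Real.hasDerivAt_sinh r).pow n
    have hdiv := (hFderiv r).div hG (pow_ne_zero _ hs.ne')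
    rw [show deriv (fun r : ℝ => (∫ x in (0 : ℝ)..r, Real.sinh x ^ (n - 1)) / Real.sinh r ^ n) r = _ from hdiv.deriv]
    apply div_neg_of_neg_of_pos
    · have hnum : Real.sinh r ^ (n - 1) * Real.sinh r ^ n -
          F r * ((n : ℝ) * Real.sinh r ^ (n - 1) * Real.cosh r)
          = Real.sinh r ^ (n - 1) * (Real.sinh r ^ n - (n : ℝ) * Real.cosh r * F r) := by
        ring
      rw [hnum]
      apply mul_neg_of_pos_of_neg (pow_pos hs _)
      have := hgpos r hr
      simp only [hgdef] at this
      linarith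
    · positivity
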